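/- Generalized Bellman–Ford correctness: for every T ≥ 0 and every vertex o, T iterations of the generalized Bellman–Ford recursion compute the path-sum of all walks of length at most T, i.e., x⁽ᵀ⁾(o) = ∑_{t=0}^{T} ∑_{p ∈ P_t(s,o)} weight(p), where P_t(s,o) is the set of walks of length t from s to o in G (so the t = 0 term is 1 if o = s and 0 otherwise). -/

import Mathlib

open Finset

/-- The weight of a walk: the product of the edge weights `wt v_{i-1} v_i` along the
walk, with the length-0 walk having weight 1. -/
def SimpleGraph.Walk.weight {V : Type*} {G : SimpleGraph V} {R : Type*} [CommSemiring R]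
    (wt : V → V → R) {u v : V} (p : G.Walk u v) : R :=
  (p.darts.map fun d => wt d.fst d.snd).prod

/-- `pathSum G wt t s o = ∑_{p ∈ P_t(s,o)} weight(p)`, the sum of the weights of all
walks of length `t` from `s` to `o` in `G`. -/
def pathSum {V : Type*} [Fintype V] [DecidableEq V] (G : SimpleGraph V) [DecidableRel G.Adj]
    {R : Type*} [CommSemiring R] (wt : V → V → R) (t : ℕ) (s o : V) : R :=
  ∑ p ∈ G.finsetWalkLength t s o, p.weight wt

/-- The generalized Bellman–Ford iterates `x⁽ᵗ⁾` with source `s`: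
`x⁽⁰⁾(o) = 1` if `o = s` and `0` otherwise, and
`x⁽ᵗ⁾(o) = (∑_{u adjacent to o} x⁽ᵗ⁻¹⁾(u) * wt u o) + x⁽⁰⁾(o)` for `t ≥ 1`. -/
def genBF {V : Type*} [Fintype V] [DecidableEq V] (G : SimpleGraph V) [DecidableRel G.Adj]
    {R : Type*} [CommSemiring R] (wt : V → V → R) (s : V) : ℕ → V → R
  | 0 => fun o => if o = s then 1 else 0
  | (t + 1) => fun o =>
      (∑ u ∈ G.neighborFinset o, genBF G wt s t u * wt u o) + (if o = s then 1 else 0)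

section Aux
set_option linter.unusedSectionVars false

variable {V : Type*} [Fintype V] [DecidableEq V] (G : SimpleGraph V) [DecidableRel G.Adj]
    {R : Type*} [CommSemiring R] (wt : V → V → R)

lemma weight_cons {u v w : V} (h : G.Adj u v) (p : G.Walk v w) :
    (SimpleGraph.Walk.cons h p).weight wt = wt u v * p.weight wt := by
  simp [SimpleGraph.Walk.weight]

lemma weight_reverse {u v : V} (p : G.Walk u v) :
    p.reverse.weight (flip wt) = p.weight wt := by
  unfold SimpleGraph.Walk.weight
  rw [SimpleGraph.Walk.darts_reverse, List.map_reverse, List.prod_reverse, List.map_map]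
  rfl

lemma pathSum_zero (s o : V) : pathSum G wt 0 s o = if o = s then 1 else 0 := by
  rcases eq_or_ne s o with rfl | h
  · simp [pathSum, SimpleGraph.finsetWalkLength, SimpleGraph.Walk.weight]
  · rw [if_neg (Ne.symm h)]
    simp [pathSum, SimpleGraph.finsetWalkLength, h]

lemma pathSum_reverse (t : ℕ) (s o : V) :
    pathSum G wt t s o = pathSum G (flip wt) t o s := by
  unfold pathSum
  refine Finset.sum_nbij' (fun p => p.reverse) (fun p => p.reverse) ?_ ?_ ?_ ?_ ?_ <;>
    simp [SimpleGraph.mem_finsetWalkLength_iff, weight_reverse]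

lemma pathSum_succ_front (t : ℕ) (s o : V) :
    pathSum G wt (t + 1) s o = ∑ u ∈ G.neighborFinset s, wt s u * pathSum G wt t u o := by
  unfold pathSum
  rw [show G.finsetWalkLength (t+1) s o =
      Finset.univ.biUnion fun (w : G.neighborSet s) =>
        (G.finsetWalkLength t w o).map ⟨fun p => SimpleGraph.Walk.cons w.property p,
          fun _ _ h => by cases h; rfl⟩ from rfl]
  rw [Finset.sum_biUnion ?_]
  · rw [SimpleGraph.neighborFinset_def, ← Finset.sum_set_coe]
    refine Finset.sum_congr rfl fun w _ => ?_
    rw [Finset.sum_map, Finset.mul_sum]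
    exact Finset.sum_congr rfl fun p _ => weight_cons G wt w.property p
  · intro a _ b _ hab
    simp only [Finset.disjoint_left, Finset.mem_map, Function.Embedding.coeFn_mk]
    rintro x ⟨p, _, rfl⟩ ⟨q, _, h⟩
    exact hab (Subtype.ext (by injection h.symm))

lemma pathSum_succ_back (t : ℕ) (s o : V) :
    pathSum G wt (t + 1) s o = ∑ u ∈ G.neighborFinset o, pathSum G wt t s u * wt u o := by
  rw [pathSum_reverse, pathSum_succ_front]
  refine Finset.sum_congr rfl fun u hu => ?_
  rw [← pathSum_reverse]
  simp [flip, mul_comm]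

theorem genBF_eq_pathSum' (s : V) (T : ℕ) (o : V) :
    genBF G wt s T o = ∑ t ∈ Finset.range (T + 1), pathSum G wt t s o := by
  induction T generalizing o with
  | zero => simp [genBF, pathSum_zero]
  | succ T ih =>
    rw [Finset.sum_range_succ' _ (T + 1)]
    show (∑ u ∈ G.neighborFinset o, genBF G wt s T u * wt u o) + (if o = s then 1 else 0) = _
    rw [← pathSum_zero G wt s o]
    congr 1
    calc ∑ u ∈ G.neighborFinset o, genBF G wt s T u * wt u o
        = ∑ u ∈ G.neighborFinset o, ∑ t ∈ Finset.range (T + 1), pathSum G wt t s u * wt u o := by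
          simp_rw [ih, Finset.sum_mul]
      _ = ∑ t ∈ Finset.range (T + 1), ∑ u ∈ G.neighborFinset o, pathSum G wt t s u * wt u o :=
          Finset.sum_comm
      _ = _ := by simp_rw [← pathSum_succ_back]

end Aux

/-- Generalized Bellman–Ford correctness: for every `T ≥ 0` and every
vertex `o`, `T` iterations of the generalized Bellman–Ford recursion compute the
path-sum of all walks of length at most `T`:
`x⁽ᵀ⁾(o) = ∑_{t=0}^{T} ∑_{p ∈ P_t(s,o)} weight(p)`. -/
theorem genBF_eq_pathSum {V : Type*} [Fintype V] [DecidableEq V]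
    (G : SimpleGraph V) [DecidableRel G.Adj] {R : Type*} [CommSemiring R]
    (wt : V → V → R) (s : V) (T : ℕ) (o : V) :
    genBF G wt s T o = ∑ t ∈ Finset.range (T + 1), pathSum G wt t s o := by
  exact genBF_eq_pathSum' G wt s T o
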